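/- For any finite set of at least 3 alternatives and any positive number of voters, the L.P.R. procedure satisfies the always-a-winner condition (every profile has at least one winner) and nonexistence of social disappointment: no L.P.R. winner is ranked last by at least half of the voters. -/

import Mathlib

open Finset

attribute [local instance] Classical.propDecidable

noncomputable section

/-- A preference profile for `n` voters: each voter has a ballot, a list of
alternatives ordered from most preferred (head) to least preferred (last). -/
abbrev Profile (n : ℕ) (A : Type*) := Fin n → List A

variable {A : Type*} [DecidableEq A]

/-- A valid profile: every ballot is a strict linear order on the alternatives,
i.e. a duplicate-free list containing every alternative. -/
def IsProfile {n : ℕ} (P : Profile n A) : Prop :=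
  ∀ i, (P i).Nodup ∧ ∀ a : A, a ∈ P i

/-- The voter with ballot `l` prefers `x` to `y`. -/
def Prefers (l : List A) (x y : A) : Prop := l.idxOf x < l.idxOf y

/-- The number of voters who rank `a` last (at the bottom of their list). -/
def lastCount {n : ℕ} (P : Profile n A) (a : A) : ℕ :=
  (univ.filter fun i => (P i).getLast? = some a).card

/-- The number of voters who rank `a` first (at the top of their list). -/
def firstCount {n : ℕ} (P : Profile n A) (a : A) : ℕ :=
  (univ.filter fun i => (P i).head? = some a).card

/-- The number of voters preferring `x` to `y`. -/
def prefCount {n : ℕ} (P : Profile n A) (x y : A) : ℕ :=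
  (univ.filter fun i => Prefers (P i) x y).card

/-- `x` defeats `y` in a pairwise majority contest: strictly more voters
prefer `x` to `y` than prefer `y` to `x`. -/
def Defeats {n : ℕ} (P : Profile n A) (x y : A) : Prop :=
  prefCount P y x < prefCount P x y

/-- Condorcet's method: the winners are the alternatives defeated by no other alternative. -/
def CondorcetWinners {n : ℕ} (P : Profile n A) : Set A :=
  {a | ∀ b, ¬ Defeats P b a}

/-- `a` is a Condorcet winner: it is the unique winner of Condorcet's method. -/
def IsCondorcetWinner {n : ℕ} (P : Profile n A) (a : A) : Prop :=
  CondorcetWinners P = {a}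

/-- The bottom alternative of ballot `l` among the still-remaining alternatives `S`. -/
def bottomAmong (S : Finset A) (l : List A) : Option A :=
  (l.filter fun x => decide (x ∈ S)).getLast?

/-- The number of voters ranking `a` last among the remaining alternatives `S`. -/
def hLastCount {n : ℕ} (P : Profile n A) (S : Finset A) (a : A) : ℕ :=
  (univ.filter fun i => bottomAmong S (P i) = some a).card

/-- One round of the L.P.R. procedure: delete from `S` the alternative(s)
currently appearing at the bottom of the largest number of lists,
i.e. keep those that are not maximal. -/
def lprStep {n : ℕ} (P : Profile n A) (S : Finset A) : Finset A :=
  S.filter fun a => ∃ b ∈ S, hLastCount P S a < hLastCount P S b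

/-- Iterating the L.P.R. rounds; once a round would delete every remaining
alternative, the process stops (those alternatives are the ones deleted last). -/
def lprIter {n : ℕ} [Fintype A] (P : Profile n A) : ℕ → Finset A
  | 0 => Finset.univ
  | k + 1 =>
      let S := lprIter P k
      if lprStep P S = ∅ then S else lprStep P S

/-- L.P.R. winners: the alternative(s) deleted in the final round. -/
def LPRWinners {n : ℕ} [Fintype A] (P : Profile n A) : Finset A :=
  lprIter P (Fintype.card A)


section Aux

variable {A : Type*} [DecidableEq A]

lemma lastCount_le_hLastCount {n : ℕ} (P : Profile n A) (S : Finset A) {a : A} (ha : a ∈ S) :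
    lastCount P a ≤ hLastCount P S a := by
  apply Finset.card_le_card
  intro i hi
  simp only [Finset.mem_filter, Finset.mem_univ, true_and] at hi ⊢
  obtain ⟨t, ht⟩ := List.getLast?_eq_some_iff.mp hi
  unfold bottomAmong
  rw [ht, List.filter_append]
  have : List.filter (fun x => decide (x ∈ S)) [a] = [a] := by
    simp [ha]
  rw [this, List.getLast?_concat]

lemma hLast_disjoint {n : ℕ} (P : Profile n A) (S : Finset A) {a b : A} (hab : a ≠ b) :
    Disjoint (Finset.univ.filter fun i : Fin n => bottomAmong S (P i) = some a)
      (Finset.univ.filter fun i : Fin n => bottomAmong S (P i) = some b) := by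
  rw [Finset.disjoint_left]
  intro i hi hi'
  simp only [Finset.mem_filter, Finset.mem_univ, true_and] at hi hi'
  rw [hi] at hi'
  exact hab (Option.some_injective _ hi')

lemma hLast_two_le {n : ℕ} (P : Profile n A) (S : Finset A) {a b : A} (hab : a ≠ b) :
    hLastCount P S a + hLastCount P S b ≤ n := by
  unfold hLastCount
  rw [← Finset.card_union_of_disjoint (hLast_disjoint P S hab)]
  calc _ ≤ (Finset.univ : Finset (Fin n)).card := Finset.card_le_card (Finset.subset_univ _)
    _ = n := by simp

lemma hLast_three_le {n : ℕ} (P : Profile n A) (S : Finset A) {a b c : A}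
    (hab : a ≠ b) (hac : a ≠ c) (hbc : b ≠ c) :
    hLastCount P S a + hLastCount P S b + hLastCount P S c ≤ n := by
  unfold hLastCount
  rw [← Finset.card_union_of_disjoint (hLast_disjoint P S hab),
      ← Finset.card_union_of_disjoint ?_]
  · calc _ ≤ (Finset.univ : Finset (Fin n)).card := Finset.card_le_card (Finset.subset_univ _)
      _ = n := by simp
  · rw [Finset.disjoint_union_left]
    exact ⟨hLast_disjoint P S hac, hLast_disjoint P S hbc⟩

lemma lprStep_ne_self {n : ℕ} (P : Profile n A) {S : Finset A} (hS : S.Nonempty) :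
    lprStep P S ≠ S := by
  obtain ⟨b, hb, hmax⟩ := S.exists_max_image (hLastCount P S) hS
  intro h
  have hb' : b ∈ lprStep P S := h.symm ▸ hb
  rw [lprStep, Finset.mem_filter] at hb'
  obtain ⟨-, c, hc, hlt⟩ := hb'
  exact absurd (hmax c hc) (not_le.mpr hlt)

variable [Fintype A]

lemma lprIter_succ_subset {n : ℕ} (P : Profile n A) (k : ℕ) :
    lprIter P (k + 1) ⊆ lprIter P k := by
  rw [lprIter]
  split
  · exact Finset.Subset.refl _
  · exact Finset.filter_subset _ _

lemma lprIter_subset_of_le {n : ℕ} (P : Profile n A) {k m : ℕ} (h : k ≤ m) :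
    lprIter P m ⊆ lprIter P k := by
  induction m with
  | zero => simp_all
  | succ m ih =>
    rcases Nat.eq_or_lt_of_le h with rfl | h'
    · exact Finset.Subset.refl _
    · exact (lprIter_succ_subset P m).trans (ih (Nat.lt_succ_iff.mp h'))

lemma lprIter_nonempty {n : ℕ} (P : Profile n A) [Nonempty A] (k : ℕ) :
    (lprIter P k).Nonempty := by
  induction k with
  | zero => exact Finset.univ_nonempty
  | succ k ih =>
    rw [lprIter]
    split
    · exact ih
    · next h => exact Finset.nonempty_iff_ne_empty.mpr h

end Aux

/-- for at least 3 alternatives and a positive number of voters,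
the L.P.R. procedure satisfies always-a-winner and nonexistence of social
disappointment: no L.P.R. winner is ranked last by at least half of the voters. -/
theorem lpr_AAW_and_nonSD {A : Type*} [Fintype A] [DecidableEq A]
    (hA : 3 ≤ Fintype.card A) {n : ℕ} (hn : 0 < n)
    (P : Profile n A) (hP : IsProfile P) :
    (LPRWinners P).Nonempty ∧ ∀ a ∈ LPRWinners P, 2 * lastCount P a < n := by
  have hA3 : 3 ≤ Fintype.card A := hA
  have : Nonempty A := Fintype.card_pos_iff.mp (by omega)
  refine ⟨lprIter_nonempty P _, ?_⟩
  intro a ha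
  by_contra hcon
  push_neg at hcon
  by_cases hWu : LPRWinners P = Finset.univ
  · -- no alternative was ever deleted: all hLastCounts on univ are equal
    have h1 : lprIter P 1 = (Finset.univ : Finset A) := by
      apply Finset.Subset.antisymm (Finset.subset_univ _)
      rw [← hWu]
      exact lprIter_subset_of_le P (by omega)
    have hstep : lprStep P (Finset.univ : Finset A) = ∅ := by
      by_contra hne
      have : lprIter P 1 = lprStep P (Finset.univ : Finset A) := by
        rw [lprIter]; simp only [lprIter]; exact if_neg hne
      rw [h1] at this
      exact lprStep_ne_self P Finset.univ_nonempty this.symm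
    have hall : ∀ x : A, hLastCount P Finset.univ x = hLastCount P Finset.univ a := by
      have hmem : ∀ x y : A, hLastCount P Finset.univ x ≤ hLastCount P Finset.univ y := by
        intro x y
        by_contra hlt
        push_neg at hlt
        have : y ∈ lprStep P (Finset.univ : Finset A) := by
          rw [lprStep, Finset.mem_filter]
          exact ⟨Finset.mem_univ _, x, Finset.mem_univ _, hlt⟩
        rw [hstep] at this
        exact absurd this (Finset.notMem_empty _)
      intro x
      exact le_antisymm (hmem x a) (hmem a x)
    -- pick two other alternatives
    obtain ⟨b, hb, c, hc, hbc⟩ := Finset.one_lt_card.mp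
      (show 1 < ((Finset.univ : Finset A).erase a).card by
        rw [Finset.card_erase_of_mem (Finset.mem_univ a), Finset.card_univ]; omega)
    have hab : a ≠ b := fun h => (Finset.mem_erase.mp hb).1 h.symm
    have hac : a ≠ c := fun h => (Finset.mem_erase.mp hc).1 h.symm
    have h3 := hLast_three_le P Finset.univ hab hac hbc
    rw [hall b, hall c] at h3
    have hle := lastCount_le_hLastCount P Finset.univ (Finset.mem_univ a)
    omega
  · -- some round deleted alternatives while a survived
    have hex : ∃ k < Fintype.card A, lprIter P (k + 1) ≠ lprIter P k := by
      by_contra hno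
      push_neg at hno
      have : ∀ m ≤ Fintype.card A, lprIter P m = Finset.univ := by
        intro m hm
        induction m with
        | zero => rfl
        | succ m ih =>
          rw [hno m (by omega), ih (by omega)]
      exact hWu (this _ le_rfl)
    obtain ⟨k, hk, hne⟩ := hex
    have hstep : lprIter P (k + 1) = lprStep P (lprIter P k) := by
      rw [lprIter] at hne ⊢
      split
      · next h => rw [if_pos h] at hne; exact absurd rfl hne
      · rfl
    have hak : a ∈ lprIter P (k + 1) := lprIter_subset_of_le P (by omega) ha
    rw [hstep, lprStep, Finset.mem_filter] at hak
    obtain ⟨haS, b, hbS, hlt⟩ := hak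
    have hab : a ≠ b := fun h => by rw [h] at hlt; exact lt_irrefl _ hlt
    have h2 := hLast_two_le P (lprIter P k) hab
    have hle := lastCount_le_hLastCount P (lprIter P k) haS
    omega
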